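/- Let r ∈ {3,5}, ζ ∈ {1,−1}, let q > 2r with gcd(q,r) = 1, set p = 6q + ζr. Let a be an integer with 0 < a < p/2, let m ∈ {0,1,2,3} satisfy 0 ≤ a − mq + (θ̄(q)ζr + q − 1)/2 < q, and assume (6a − mp)² < 48rp. Let k be an integer with 0 ≤ k < (p−13r+6)/(48√(3rp)) − 1/6, and set i_k = (θ̄(q)p+q−1)/2 + 6ak − kmp and j_k = (θ̄(q)ζr+q−1)/2 + 6ak − kmp. Then 0 ≤ i_k < i_k + a < p + q, and 0 ≤ j_k < q and 0 ≤ j_k + a − mq < q. -/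

import Mathlib

/-- The Spin^c labels `i_k`, `j_k` lie in the admissible ranges:
`0 ≤ i_k < i_k + a < p + q`, `0 ≤ j_k < q` and `0 ≤ j_k + a - mq < q`. -/
theorem ik_jk_in_range (r ζ q p a m k : ℤ)
    (hr : r = 3 ∨ r = 5) (hζ : ζ = 1 ∨ ζ = -1)
    (hq : 2 * r < q) (hqr : Int.gcd q r = 1) (hp : p = 6 * q + ζ * r)
    (ha0 : 0 < a) (ha1 : 2 * a < p)
    (hm : m = 0 ∨ m = 1 ∨ m = 2 ∨ m = 3)
    (hm0 : 0 ≤ a - m * q + ((1 - q % 2) * ζ * r + q - 1) / 2)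
    (hm1 : a - m * q + ((1 - q % 2) * ζ * r + q - 1) / 2 < q)
    (hbound : (6 * a - m * p) ^ 2 < 48 * r * p)
    (hk0 : 0 ≤ k)
    (hk : (k : ℝ) < ((p : ℝ) - 13 * r + 6) / (48 * Real.sqrt (3 * r * p)) - 1/6)
    (ik jk : ℤ)
    (hik : ik = ((1 - q % 2) * p + q - 1) / 2 + 6 * a * k - k * m * p)
    (hjk : jk = ((1 - q % 2) * ζ * r + q - 1) / 2 + 6 * a * k - k * m * p) :
    0 ≤ ik ∧ ik < ik + a ∧ ik + a < p + q ∧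
    0 ≤ jk ∧ jk < q ∧ 0 ≤ jk + a - m * q ∧ jk + a - m * q < q := by
  have hr0 : (0:ℤ) < r := by rcases hr with h|h <;> simp [h]
  have hp0 : (0:ℤ) < p := by
    rcases hζ with h|h <;> subst h <;> linarith
  set d : ℤ := 6 * a - m * p with hd
  -- real analysis part: bound 12 * |d| * k + 2 * |d| < p - 13 r + 6
  have hrpR : (0:ℝ) < 3 * (r:ℝ) * (p:ℝ) := by
    have h1 : (0:ℝ) < (r:ℝ) := by exact_mod_cast hr0
    have h2 : (0:ℝ) < (p:ℝ) := by exact_mod_cast hp0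
    positivity
  set s : ℝ := Real.sqrt (3 * (r:ℝ) * (p:ℝ)) with hs
  have hs0 : 0 < s := Real.sqrt_pos.mpr hrpR
  have habs : |(d:ℝ)| < 4 * s := by
    have h1 : Real.sqrt ((d:ℝ)^2) < Real.sqrt (48 * (r:ℝ) * (p:ℝ)) := by
      apply Real.sqrt_lt_sqrt (by positivity)
      exact_mod_cast hbound
    rw [Real.sqrt_sq_eq_abs] at h1
    have h2 : Real.sqrt (48 * (r:ℝ) * (p:ℝ)) = 4 * s := by
      rw [hs, show (48:ℝ) * (r:ℝ) * (p:ℝ) = 16 * (3 * (r:ℝ) * (p:ℝ)) by ring,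
        Real.sqrt_mul (by norm_num),
        show (16:ℝ) = 4 ^ 2 by norm_num, Real.sqrt_sq (by norm_num)]
    linarith [h1, h2.symm.trans_ge (le_of_eq h2.symm)] <;> linarith
  have hkR : (k:ℝ) + 1/6 < ((p:ℝ) - 13 * r + 6) / (48 * s) := by
    rw [hs]; linarith [hk]
  have hkey : 12 * (|d| * k) + 2 * |d| < p - 13 * r + 6 := by
    have h3 : |(d:ℝ)| * ((k:ℝ) + 1/6) < (4 * s) * (((p:ℝ) - 13 * r + 6) / (48 * s)) := by
      apply mul_lt_mul'' habs hkR (abs_nonneg _)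
      have : (0:ℝ) ≤ (k:ℝ) := by exact_mod_cast hk0
      linarith
    have h4 : (4 * s) * (((p:ℝ) - 13 * r + 6) / (48 * s)) = ((p:ℝ) - 13 * r + 6) / 12 := by
      field_simp
      ring
    rw [h4] at h3
    have h5 : ((12 * (|d| * k) + 2 * |d| : ℤ) : ℝ) < (((p : ℤ) - 13 * r + 6 : ℤ) : ℝ) := by
      push_cast [Int.cast_abs]
      linarith
    exact_mod_cast h5
  have hK1 : d * k ≤ |d| * k := mul_le_mul_of_nonneg_right (le_abs_self d) hk0
  have hK2 : -(|d| * k) ≤ d * k := by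
    have := mul_le_mul_of_nonneg_right (neg_abs_le d) hk0
    linarith
  have hd1 : d ≤ |d| := le_abs_self d
  have hd2 : -|d| ≤ d := neg_abs_le d
  have hikK : ik = ((1 - q % 2) * p + q - 1) / 2 + d * k := by rw [hik, hd]; ring
  have hjkK : jk = ((1 - q % 2) * ζ * r + q - 1) / 2 + d * k := by rw [hjk, hd]; ring
  obtain ⟨K, E, e, hik', hjk', h1, h2, h3, h4, h5⟩ :
      ∃ K E e : ℤ, ik = ((1 - q % 2) * p + q - 1) / 2 + K ∧
        jk = ((1 - q % 2) * ζ * r + q - 1) / 2 + K ∧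
        K ≤ E ∧ -E ≤ K ∧ d ≤ e ∧ -e ≤ d ∧ 12 * E + 2 * e < p - 13 * r + 6 :=
    ⟨d * k, |d| * k, |d|, hikK, hjkK, hK1, hK2, hd1, hd2, hkey⟩
  clear hik hjk hbound hk hikK hjkK hK1 hK2 hd1 hd2 hkey habs hkR hs0 hrpR hqr
  rcases Int.emod_two_eq q with h2|h2 <;>
    rw [h2] at hm0 hm1 hik' hjk' <;>
    norm_num at hm0 hm1 hik' hjk' <;>
    rcases hr with h|h <;> subst h <;>
    rcases hζ with h'|h' <;> subst h' <;>
    rcases hm with h''|h''|h''|h'' <;> subst h'' <;>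
    omega
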